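/- If a quantum state ρ on the symmetric subspace of C^d ⊗ C^d is absolutely symmetric PPT, then all d(d+1)/2 of its eigenvalues are strictly positive. Equivalently: if λ_1 ≥ ... ≥ λ_n ≥ 0 (n = d(d+1)/2) sum to 1 and every d×d symmetric matricization of (λ_1,...,λ_n) is positive semidefinite, then λ_n > 0. -/

import Mathlib

open Matrix

/-- The symmetric matricization of the vector `lam` determined by a bijection `e`
from the upper-triangular positions of a d×d matrix to the index set of `lam`:
it is X + Xᵀ where X is upper triangular with upper-triangular entries the
entries of `lam` in the order prescribed by `e`. -/
noncomputable def symMatricization (d : ℕ) (lam : Fin (d * (d + 1) / 2) → ℝ)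
    (e : {p : Fin d × Fin d // p.1 ≤ p.2} ≃ Fin (d * (d + 1) / 2)) :
    Matrix (Fin d) (Fin d) ℝ :=
  fun i j =>
    if h : i ≤ j then (if i = j then 2 else 1) * lam (e ⟨(i, j), h⟩)
    else lam (e ⟨(j, i), (le_total i j).resolve_left h⟩)

lemma card_upper (d : ℕ) :
    Fintype.card {p : Fin d × Fin d // p.1 ≤ p.2} = d * (d + 1) / 2 := by
  rw [← Fintype.card_congr (Sym2.sortEquiv (α := Fin d)), Sym2.card]
  simp [Nat.choose_two_right, Nat.mul_comm]

theorem stmt7 (d : ℕ) (lam : Fin (d * (d + 1) / 2) → ℝ)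
    (hsort : ∀ i j, i ≤ j → lam j ≤ lam i)
    (hnonneg : ∀ i, 0 ≤ lam i)
    (hsum : ∑ i, lam i = 1)
    (hPSD : ∀ e : {p : Fin d × Fin d // p.1 ≤ p.2} ≃ Fin (d * (d + 1) / 2),
      (symMatricization d lam e).PosSemidef) :
    ∀ i, 0 < lam i := by
  intro i
  by_contra h
  push_neg at h
  have h0 : lam i = 0 := le_antisymm h (hnonneg i)
  have npos : 0 < d * (d + 1) / 2 := i.pos
  set i0 : Fin (d * (d + 1) / 2) := ⟨0, npos⟩ with hi0
  -- It suffices to show lam i0 = 0 (the max entry)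
  have key : lam i0 = 0 → False := by
    intro hzero
    have hall : ∀ j, lam j = 0 := fun j =>
      le_antisymm (hzero ▸ hsort i0 j (by simp [hi0, Fin.le_def])) (hnonneg j)
    rw [Finset.sum_eq_zero (fun j _ => hall j)] at hsum
    exact one_ne_zero hsum.symm
  -- case i = i0
  by_cases hii0 : i = i0
  · exact key (hii0 ▸ h0)
  -- Now d ≥ 2, since there are at least two indices.
  have hd : 2 ≤ d := by
    by_contra hd
    interval_cases d
    · exact absurd i.2 (by norm_num)
    · have : i = i0 := Fin.ext (by omega)
      exact hii0 this
  set z : Fin d := ⟨0, by omega⟩ with hz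
  set o : Fin d := ⟨1, by omega⟩ with ho
  have hzo : z ≤ o := by simp [hz, ho, Fin.le_def]
  have hzo' : z ≠ o := by simp [hz, ho, Fin.ext_iff]
  have hoz : ¬ o ≤ z := by simp [hz, ho, Fin.le_def]
  set p00 : {p : Fin d × Fin d // p.1 ≤ p.2} := ⟨(z, z), le_refl z⟩ with hp00
  set p01 : {p : Fin d × Fin d // p.1 ≤ p.2} := ⟨(z, o), hzo⟩ with hp01
  have hp : p00 ≠ p01 := by
    simp [hp00, hp01, Subtype.ext_iff, Prod.ext_iff, hzo']
  obtain ⟨e0⟩ : Nonempty ({p : Fin d × Fin d // p.1 ≤ p.2} ≃ Fin (d * (d + 1) / 2)) :=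
    ⟨Fintype.equivFinOfCardEq (card_upper d)⟩
  set e1 := e0.trans (Equiv.swap (e0 p00) i) with he1
  have he1p00 : e1 p00 = i := by simp [he1, Equiv.swap_apply_left]
  set b := e1 p01 with hb
  have hbi : b ≠ i := by
    intro hbi
    exact hp (e1.injective (by rw [he1p00, ← hbi]))
  set e := e1.trans (Equiv.swap b i0) with he
  have hep00 : e p00 = i := by
    simp only [he, Equiv.trans_apply, he1p00]
    exact Equiv.swap_apply_of_ne_of_ne (Ne.symm hbi) hii0
  have hep01 : e p01 = i0 := by
    simp only [he, Equiv.trans_apply, ← hb]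
    exact Equiv.swap_apply_left b i0
  have hM := hPSD e
  set M := symMatricization d lam e with hMdef
  set a := lam i0 with ha
  set c := lam (e ⟨(o, o), le_refl o⟩) with hc
  have hA00 : M z z = 0 := by
    rw [hMdef]
    show (if h : z ≤ z then (if z = z then (2:ℝ) else 1) * lam (e ⟨(z, z), h⟩)
      else lam (e ⟨(z, z), le_of_not_ge h⟩)) = 0
    rw [dif_pos (le_refl z), if_pos rfl]
    have : (⟨(z, z), le_refl z⟩ : {p : Fin d × Fin d // p.1 ≤ p.2}) = p00 := rfl
    rw [this, hep00, h0, mul_zero]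
  have hA01 : M z o = a := by
    rw [hMdef]
    show (if h : z ≤ o then (if z = o then (2:ℝ) else 1) * lam (e ⟨(z, o), h⟩)
      else lam (e ⟨(o, z), le_of_not_ge h⟩)) = a
    rw [dif_pos hzo, if_neg hzo']
    have : (⟨(z, o), hzo⟩ : {p : Fin d × Fin d // p.1 ≤ p.2}) = p01 := rfl
    rw [this, hep01, one_mul]
  have hA10 : M o z = a := by
    rw [hMdef]
    show (if h : o ≤ z then (if o = z then (2:ℝ) else 1) * lam (e ⟨(o, z), h⟩)
      else lam (e ⟨(z, o), le_of_not_ge h⟩)) = a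
    rw [dif_neg hoz]
    have : (⟨(z, o), le_of_not_ge hoz⟩ : {p : Fin d × Fin d // p.1 ≤ p.2}) = p01 := rfl
    rw [this, hep01]
  have hA11 : M o o = 2 * c := by
    rw [hMdef]
    show (if h : o ≤ o then (if o = o then (2:ℝ) else 1) * lam (e ⟨(o, o), h⟩)
      else lam (e ⟨(o, o), le_of_not_ge h⟩)) = 2 * c
    rw [dif_pos (le_refl o), if_pos rfl]
  -- quadratic form on the 2×2 principal submatrix
  have hq : ∀ t : ℝ, 0 ≤ 2 * a * t + 2 * c := by
    intro t
    have hsub := (hM.submatrix (fun k : Fin 2 => if k = 0 then z else o)).dotProduct_mulVec_nonneg ![t, 1]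
    simp only [RCLike.star_def, dotProduct, mulVec, Fin.sum_univ_two,
      Matrix.submatrix_apply, Matrix.cons_val_zero, Matrix.cons_val_one,
      Matrix.head_cons, star_trivial] at hsub
    norm_num at hsub
    rw [hA00, hA01, hA10, hA11] at hsub
    nlinarith [hsub]
  -- conclude a = 0
  have hc0 : 0 ≤ c := hnonneg _
  have ha0 : 0 ≤ a := hnonneg _
  have : a = 0 := by
    by_contra ha'
    have hapos : 0 < a := lt_of_le_of_ne ha0 (Ne.symm ha')
    have := hq (-(c + 1) / a)
    have h2 : 2 * a * (-(c + 1) / a) = -2 * (c + 1) := by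
      field_simp
    rw [h2] at this
    linarith
  exact key this
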